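/- Let h ∈ (θ, ∞) be the unique zero of the countable-alphabet pressure P. Then for every s_* ∈ (θ, h) there exists an integer N such that for all n > N one has ∑_{i≥1} (N_i(n)/n) · log(∑_{j=1}^∞ γ_{ij}^{s_*}) > 0 (equivalently ∑_{σ∈ℕ^n} c_σ^{s_*} > 1), and for every s^* ∈ (h, ∞) there exists an integer N′ such that for all n > N′ one has ∑_{i≥1} (N_i(n)/n) · log(∑_{j=1}^∞ γ_{ij}^{s^*}) < 0 (equivalently ∑_{σ∈ℕ^n} c_σ^{s^*} < 1). -/

import Mathlib

set_option maxHeartbeats 1000000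

open Real Filter

private lemma tsum_pi_fin_prod : ∀ (n : ℕ) (f : Fin n → ℕ → ℝ), (∀ k j, 0 ≤ f k j) →
    (∀ k, Summable (f k)) →
    Summable (fun σ : Fin n → ℕ => ∏ k, f k (σ k)) ∧
    (∑' σ : Fin n → ℕ, ∏ k, f k (σ k)) = ∏ k, ∑' j, f k j := by
  intro n
  induction n with
  | zero =>
    intro f _ _
    refine ⟨Summable.of_finite, ?_⟩
    simp
  | succ n ih =>
    intro f hf hsum
    obtain ⟨ihS, ihT⟩ := ih (fun k => f k.succ) (fun k j => hf _ _) (fun k => hsum _)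
    have hnn : ∀ τ : Fin n → ℕ, (0:ℝ) ≤ ∏ k, f k.succ (τ k) := fun τ =>
      Finset.prod_nonneg fun k _ => hf _ _
    have h0 : ∀ j, (0:ℝ) ≤ f 0 j := fun j => hf 0 j
    have hps := Summable.mul_of_nonneg (hsum 0) ihS h0 hnn
    set e := (Fin.consEquiv (fun _ : Fin (n + 1) => ℕ)).symm with he
    have hcomp : ∀ σ : Fin (n + 1) → ℕ,
        (∏ k, f k (σ k)) = f 0 (e σ).1 * ∏ k, f k.succ ((e σ).2 k) := by
      intro σ
      rw [Fin.prod_univ_succ]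
      rfl
    constructor
    · have H := e.summable_iff.mpr hps
      refine H.congr fun σ => ?_
      exact (hcomp σ).symm
    · have h1 : (∑' σ : Fin (n + 1) → ℕ, ∏ k, f k (σ k))
          = ∑' p : ℕ × (Fin n → ℕ), f 0 p.1 * ∏ k, f k.succ (p.2 k) := by
        rw [← e.tsum_eq (f := fun p : ℕ × (Fin n → ℕ) => f 0 p.1 * ∏ k, f k.succ (p.2 k))]
        exact tsum_congr hcomp
      have h2 := Summable.tsum_prod' hps fun b => ihS.mul_left (f 0 b)
      rw [h1, h2]
      simp_rw [tsum_mul_left, ihT, tsum_mul_right]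
      rw [Fin.prod_univ_succ]

private lemma tsum_fiber_card_mul (n : ℕ) (ω : ℕ → ℕ) (L : ℕ → ℝ) :
    ∑' i, (((Finset.range n).filter (fun l => ω l = i)).card : ℝ) * L i
      = ∑ k ∈ Finset.range n, L (ω k) := by
  classical
  rw [tsum_eq_sum (s := (Finset.range n).image ω)
    (f := fun i => (((Finset.range n).filter (fun l => ω l = i)).card : ℝ) * L i)
    (fun i hi => by
      have hemp : (Finset.range n).filter (fun l => ω l = i) = ∅ :=
        Finset.filter_eq_empty_iff.mpr fun k hk hco => hi (Finset.mem_image.mpr ⟨k, hk, hco⟩)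
      simp [hemp])]
  rw [← Finset.sum_fiberwise_of_maps_to (g := ω)
    (fun k hk => Finset.mem_image_of_mem ω hk) (fun k => L (ω k))]
  refine Finset.sum_congr rfl fun i _ => ?_
  rw [Finset.sum_congr rfl (fun k hk => by rw [(Finset.mem_filter.mp hk).2]),
    Finset.sum_const, nsmul_eq_mul]

private lemma summable_weight_mul (a : ℕ → ℝ) (hann : ∀ i, 0 ≤ a i) (hasum : Summable a)
    (L : ℕ → ℝ) (M : ℝ) (hM : ∀ i, |L i| ≤ M) : Summable fun i => a i * L i :=
  Summable.of_norm_bounded (hasum.mul_right M) (fun i => by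
    rw [Real.norm_eq_abs, abs_mul, abs_of_nonneg (hann i)]
    exact mul_le_mul_of_nonneg_left (hM i) (hann i))

private lemma tendsto_tsum_weights (η : ℕ → ℝ) (hηnn : ∀ i, 0 ≤ η i) (hηsum : Summable η)
    (hη1 : ∑' i, η i = 1)
    (a : ℕ → ℕ → ℝ) (hann : ∀ n i, 0 ≤ a n i)
    (hasum : ∀ n, Summable (a n)) (ha1 : ∀ n, 1 ≤ n → ∑' i, a n i = 1)
    (hconv : ∀ i, Tendsto (fun n => a n i) atTop (nhds (η i)))
    (L : ℕ → ℝ) (M : ℝ) (hM : ∀ i, |L i| ≤ M) :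
    Tendsto (fun n => ∑' i, a n i * L i) atTop (nhds (∑' i, η i * L i)) := by
  have hM0 : 0 ≤ M := (abs_nonneg _).trans (hM 0)
  have SL : ∀ n, Summable fun i => a n i * L i := fun n =>
    summable_weight_mul _ (hann n) (hasum n) L M hM
  have SLeta : Summable fun i => η i * L i := summable_weight_mul _ hηnn hηsum L M hM
  rw [Metric.tendsto_atTop]
  intro ε hε
  have hM1 : (0:ℝ) < 4 * (M + 1) := by linarith
  set ε' := ε / (4 * (M + 1)) with hε'def
  have hε' : 0 < ε' := div_pos hε hM1
  have hεeq : 4 * (M + 1) * ε' = ε := by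
    rw [hε'def]; field_simp
  have htends := hηsum.hasSum.tendsto_sum_nat
  rw [hη1] at htends
  obtain ⟨m, hm⟩ := (htends.eventually (eventually_gt_nhds
    (show (1:ℝ) - ε' < 1 by linarith))).exists
  set F := Finset.range m with hF
  have htailη : ∑' i : ↑((F : Set ℕ)ᶜ), η i < ε' := by
    have hsplit := Summable.sum_add_tsum_compl (s := F) hηsum
    rw [hη1] at hsplit
    linarith
  have htailη0 : 0 ≤ ∑' i : ↑((F : Set ℕ)ᶜ), η i := tsum_nonneg fun i => hηnn i
  have hT1 : Tendsto (fun n => ∑ i ∈ F, |a n i - η i|) atTop (nhds 0) := by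
    have h0 : Tendsto (fun n => ∑ i ∈ F, |a n i - η i|) atTop
        (nhds (∑ i ∈ F, |η i - η i|)) :=
      tendsto_finset_sum F fun i _ => ((hconv i).sub tendsto_const_nhds).abs
    simpa using h0
  obtain ⟨N1, hN1⟩ := eventually_atTop.mp (hT1.eventually (eventually_lt_nhds hε'))
  refine ⟨max N1 1, fun n hn => ?_⟩
  have hn1 : 1 ≤ n := le_trans (le_max_right _ _) hn
  have hT1n : ∑ i ∈ F, |a n i - η i| < ε' := hN1 n (le_trans (le_max_left _ _) hn)
  have hT1nn : 0 ≤ ∑ i ∈ F, |a n i - η i| := Finset.sum_nonneg fun i _ => abs_nonneg _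
  have hsplita := Summable.sum_add_tsum_compl (s := F) (SL n)
  have hsplitη := Summable.sum_add_tsum_compl (s := F) SLeta
  have hsplita' := Summable.sum_add_tsum_compl (s := F) (hasum n)
  rw [ha1 n hn1] at hsplita'
  have htaila0 : 0 ≤ ∑' i : ↑((F : Set ℕ)ᶜ), a n i := tsum_nonneg fun i => hann n _
  have htaila : ∑' i : ↑((F : Set ℕ)ᶜ), a n i < 2 * ε' := by
    have h1 : ∑ i ∈ F, η i - ∑ i ∈ F, a n i ≤ ∑ i ∈ F, |a n i - η i| := by
      rw [← Finset.sum_sub_distrib]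
      refine Finset.sum_le_sum fun i _ => ?_
      rw [abs_sub_comm]
      exact le_abs_self _
    linarith
  have hbnd : ∀ (b : ℕ → ℝ), (∀ i, 0 ≤ b i) → Summable b →
      |∑' i : ↑((F : Set ℕ)ᶜ), b ↑i * L ↑i| ≤ M * ∑' i : ↑((F : Set ℕ)ᶜ), b ↑i := by
    intro b hbnn hbsum
    have hbL : Summable fun i => b i * L i := summable_weight_mul b hbnn hbsum L M hM
    have hbLs : Summable fun i : ↑((F : Set ℕ)ᶜ) => b ↑i * L ↑i := hbL.subtype _
    have hbMs : Summable fun i : ↑((F : Set ℕ)ᶜ) => b ↑i * M := (hbsum.mul_right M).subtype _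
    have hbs : Summable fun i : ↑((F : Set ℕ)ᶜ) => b ↑i := hbsum.subtype _
    have h1 : |∑' i : ↑((F : Set ℕ)ᶜ), b ↑i * L ↑i| ≤ ∑' i : ↑((F : Set ℕ)ᶜ), |b ↑i * L ↑i| := by
      have := norm_tsum_le_tsum_norm (f := fun i : ↑((F : Set ℕ)ᶜ) => b ↑i * L ↑i) (hbLs.abs)
      simpa only [Real.norm_eq_abs] using this
    have h2 : ∑' i : ↑((F : Set ℕ)ᶜ), |b ↑i * L ↑i| ≤ ∑' i : ↑((F : Set ℕ)ᶜ), b ↑i * M := by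
      refine Summable.tsum_le_tsum (fun i => ?_) hbLs.abs hbMs
      rw [abs_mul, abs_of_nonneg (hbnn i)]
      exact mul_le_mul_of_nonneg_left (hM _) (hbnn _)
    have h3 : ∑' i : ↑((F : Set ℕ)ᶜ), b ↑i * M = M * ∑' i : ↑((F : Set ℕ)ᶜ), b ↑i := by
      rw [tsum_mul_right, mul_comm]
    linarith
  have hFb : |∑ i ∈ F, (a n i - η i) * L i| ≤ M * ∑ i ∈ F, |a n i - η i| := by
    calc |∑ i ∈ F, (a n i - η i) * L i| ≤ ∑ i ∈ F, |(a n i - η i) * L i| :=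
          Finset.abs_sum_le_sum_abs _ _
      _ ≤ ∑ i ∈ F, |a n i - η i| * M := by
          refine Finset.sum_le_sum fun i _ => ?_
          rw [abs_mul]
          exact mul_le_mul_of_nonneg_left (hM _) (abs_nonneg _)
      _ = M * ∑ i ∈ F, |a n i - η i| := by
          rw [Finset.mul_sum]
          exact Finset.sum_congr rfl fun i _ => mul_comm _ _
  have key : (∑' i, a n i * L i) - ∑' i, η i * L i
      = (∑ i ∈ F, (a n i - η i) * L i)
        + ((∑' i : ↑((F : Set ℕ)ᶜ), a n ↑i * L ↑i) - ∑' i : ↑((F : Set ℕ)ᶜ), η ↑i * L ↑i) := by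
    have hXY : ∑ i ∈ F, (a n i - η i) * L i
        = ∑ i ∈ F, a n i * L i - ∑ i ∈ F, η i * L i := by
      rw [← Finset.sum_sub_distrib]
      exact Finset.sum_congr rfl fun i _ => sub_mul _ _ _
    rw [← hsplita, ← hsplitη, hXY]
    ring
  have hba := hbnd (a n) (hann n) (hasum n)
  have hbη := hbnd η hηnn hηsum
  have e1 : M * ∑ i ∈ F, |a n i - η i| ≤ M * ε' :=
    mul_le_mul_of_nonneg_left (le_of_lt hT1n) hM0
  have e2 : M * ∑' i : ↑((F : Set ℕ)ᶜ), a n ↑i ≤ M * (2 * ε') :=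
    mul_le_mul_of_nonneg_left (le_of_lt htaila) hM0
  have e3 : M * ∑' i : ↑((F : Set ℕ)ᶜ), η ↑i ≤ M * ε' :=
    mul_le_mul_of_nonneg_left (le_of_lt htailη) hM0
  rw [Real.dist_eq, key]
  calc |(∑ i ∈ F, (a n i - η i) * L i)
        + ((∑' i : ↑((F : Set ℕ)ᶜ), a n ↑i * L ↑i) - ∑' i : ↑((F : Set ℕ)ᶜ), η ↑i * L ↑i)|
      ≤ |∑ i ∈ F, (a n i - η i) * L i|
        + (|∑' i : ↑((F : Set ℕ)ᶜ), a n ↑i * L ↑i| + |∑' i : ↑((F : Set ℕ)ᶜ), η ↑i * L ↑i|) := by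
        refine (abs_add_le _ _).trans ?_
        exact add_le_add le_rfl (abs_sub _ _)
    _ < ε := by linarith

private lemma aux_main
    (η : ℕ → ℝ) (hηpos : ∀ i, 0 < η i) (hηsum : Summable η) (hη1 : ∑' i, η i = 1)
    (ω : ℕ → ℕ)
    (hfreq : ∀ i, Tendsto
      (fun n => (((Finset.range n).filter (fun k => ω k = i)).card : ℝ) / n)
      atTop (nhds (η i)))
    (γ : ℕ → ℕ → ℝ) (hγpos : ∀ i j, 0 < γ i j)
    (t M : ℝ)
    (hM : ∀ i, Summable (fun j => γ i j ^ t) ∧ |Real.log (∑' j, γ i j ^ t)| ≤ M) :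
    Tendsto (fun n => ∑' i : ℕ, (((Finset.range n).filter (fun l => ω l = i)).card : ℝ) / n *
        Real.log (∑' j, γ i j ^ t)) atTop
      (nhds (∑' i, η i * Real.log (∑' j, γ i j ^ t))) ∧
    ∀ n : ℕ, 1 ≤ n →
      (0 < ∑' σ : Fin n → ℕ, (∏ k : Fin n, γ (ω k) (σ k)) ^ t) ∧
      Real.log (∑' σ : Fin n → ℕ, (∏ k : Fin n, γ (ω k) (σ k)) ^ t)
        = n * ∑' i : ℕ, (((Finset.range n).filter (fun l => ω l = i)).card : ℝ) / n *
            Real.log (∑' j, γ i j ^ t) := by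
  have hApos : ∀ i, 0 < ∑' j, γ i j ^ t := fun i =>
    Summable.tsum_pos (hM i).1 (fun j => Real.rpow_nonneg (hγpos i j).le t) 0
      (Real.rpow_pos_of_pos (hγpos i 0) t)
  have hNzero : ∀ (n i : ℕ), i ∉ (Finset.range n).image ω →
      (((Finset.range n).filter fun l => ω l = i) = ∅) := fun n i hi =>
    Finset.filter_eq_empty_iff.mpr fun k hk hco => hi (Finset.mem_image.mpr ⟨k, hk, hco⟩)
  have hasum : ∀ n : ℕ, Summable fun i =>
      (((Finset.range n).filter (fun l => ω l = i)).card : ℝ) / n := by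
    intro n
    refine summable_of_ne_finset_zero (s := (Finset.range n).image ω) fun i hi => ?_
    rw [hNzero n i hi]
    simp
  have hcard : ∀ n : ℕ,
      (∑' i, (((Finset.range n).filter (fun l => ω l = i)).card : ℝ)) = n := by
    intro n
    have h1 := tsum_fiber_card_mul n ω (fun _ => (1:ℝ))
    simpa using h1
  have ha1 : ∀ n : ℕ, 1 ≤ n →
      (∑' i, (((Finset.range n).filter (fun l => ω l = i)).card : ℝ) / n) = 1 := by
    intro n hn
    have hnne : (n:ℝ) ≠ 0 := Nat.cast_ne_zero.mpr (by omega)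
    rw [tsum_div_const, hcard n]
    field_simp
  have hSn : ∀ n : ℕ,
      (∑' i, (((Finset.range n).filter (fun l => ω l = i)).card : ℝ) / n *
          Real.log (∑' j, γ i j ^ t))
        = (∑ k ∈ Finset.range n, Real.log (∑' j, γ (ω k) j ^ t)) / n := by
    intro n
    have h1 : ∀ i, (((Finset.range n).filter (fun l => ω l = i)).card : ℝ) / n *
          Real.log (∑' j, γ i j ^ t)
        = ((((Finset.range n).filter (fun l => ω l = i)).card : ℝ) *
            Real.log (∑' j, γ i j ^ t)) / n := fun i => by
      ring
    rw [tsum_congr h1, tsum_div_const,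
      tsum_fiber_card_mul n ω (fun i => Real.log (∑' j, γ i j ^ t))]
  constructor
  · exact tendsto_tsum_weights η (fun i => (hηpos i).le) hηsum hη1 _
      (fun n i => by positivity) hasum ha1 hfreq _ M (fun i => (hM i).2)
  · intro n hn
    have hnne : (n:ℝ) ≠ 0 := Nat.cast_ne_zero.mpr (by omega)
    obtain ⟨hSum, hTs⟩ := tsum_pi_fin_prod n (fun k j => γ (ω k) j ^ t)
      (fun k j => Real.rpow_nonneg (hγpos _ _).le t) (fun k => (hM (ω k)).1)
    have hprod_eq : ∀ σ : Fin n → ℕ, (∏ k : Fin n, γ (ω k) (σ k)) ^ t = ∏ k : Fin n, γ (ω k) (σ k) ^ t :=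
      fun σ => (Real.finset_prod_rpow Finset.univ _ (fun k _ => (hγpos _ _).le) t).symm
    have hQ : (∑' σ : Fin n → ℕ, (∏ k : Fin n, γ (ω k) (σ k)) ^ t)
        = ∏ k : Fin n, ∑' j, γ (ω k) j ^ t := by
      rw [tsum_congr hprod_eq, hTs]
    have hQpos : 0 < ∏ k : Fin n, ∑' j, γ (ω k) j ^ t :=
      Finset.prod_pos fun k _ => hApos (ω k)
    refine ⟨by rw [hQ]; exact hQpos, ?_⟩
    rw [hQ, ← Finset.prod_range (fun k => ∑' j, γ (ω k) j ^ t),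
      Real.log_prod (fun k _ => (hApos (ω k)).ne'), hSn n]
    field_simp

/-- (Countable alphabet.) If `h ∈ (θ, ∞)` is the unique zero of the
countable-alphabet pressure `P`, then for `s_* ∈ (θ, h)` eventually
`∑ᵢ (Nᵢ(n)/n) · log (∑ⱼ γᵢⱼ^{s_*}) > 0` (equivalently `∑_{σ∈ℕⁿ} c_σ^{s_*} > 1`), and for
`s^* ∈ (h, ∞)` eventually `∑ᵢ (Nᵢ(n)/n) · log (∑ⱼ γᵢⱼ^{s^*}) < 0`
(equivalently `∑_{σ∈ℕⁿ} c_σ^{s^*} < 1`). -/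
theorem countable_pressure_partition_sums
    (η : ℕ → ℝ) (hηpos : ∀ i, 0 < η i)
    (hηsum : Summable η) (hη1 : ∑' i, η i = 1)
    (ω : ℕ → ℕ)
    (hfreq : ∀ i, Tendsto
      (fun n => (((Finset.range n).filter (fun k => ω k = i)).card : ℝ) / n)
      atTop (nhds (η i)))
    (γ : ℕ → ℕ → ℝ) (hγpos : ∀ i j, 0 < γ i j)
    (hγsum : ∃ B : ℝ, ∀ i, Summable (fun j => γ i j) ∧ ∑' j, γ i j ≤ B)
    (hγsup : ∃ C : ℝ, C < 1 ∧ ∀ i j, γ i j ≤ C)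
    (θ : ℝ)
    (hθ : θ = sInf {t : ℝ | 0 < t ∧
      ∃ B : ℝ, ∀ i, Summable (fun j => γ i j ^ t) ∧ ∑' j, γ i j ^ t ≤ B})
    (hbound : ∀ t : ℝ, θ < t → ∃ M : ℝ, ∀ i,
      Summable (fun j => γ i j ^ t) ∧ |Real.log (∑' j, γ i j ^ t)| ≤ M)
    (P : ℝ → ℝ)
    (hP : ∀ t : ℝ, P t = ∑' i : ℕ, η i * Real.log (∑' j, γ i j ^ t))
    (hu : ∃ u ∈ Set.Ioi θ, 0 < P u)
    (h : ℝ) (hh : h ∈ Set.Ioi θ ∧ P h = 0) :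
    (∀ sstar ∈ Set.Ioo θ h, ∃ N : ℕ, ∀ n : ℕ, N < n →
      0 < (∑' i : ℕ, (((Finset.range n).filter (fun l => ω l = i)).card : ℝ) / n *
            Real.log (∑' j, γ i j ^ sstar)) ∧
      1 < ∑' σ : Fin n → ℕ, (∏ k : Fin n, γ (ω k) (σ k)) ^ sstar) ∧
    (∀ shigh ∈ Set.Ioi h, ∃ N' : ℕ, ∀ n : ℕ, N' < n →
      (∑' i : ℕ, (((Finset.range n).filter (fun l => ω l = i)).card : ℝ) / n *
            Real.log (∑' j, γ i j ^ shigh)) < 0 ∧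
      (∑' σ : Fin n → ℕ, (∏ k : Fin n, γ (ω k) (σ k)) ^ shigh) < 1) := by
  obtain ⟨C, hC1, hCle⟩ := hγsup
  have hγlt1 : ∀ i j, γ i j < 1 := fun i j => lt_of_le_of_lt (hCle i j) hC1
  have hPanti : ∀ s u : ℝ, θ < s → s < u → P u < P s := by
    intro s u hs hsu
    obtain ⟨Ms, hMs⟩ := hbound s hs
    obtain ⟨Mu, hMu⟩ := hbound u (hs.trans hsu)
    have hposu : ∀ i, 0 < ∑' j, γ i j ^ u := fun i =>
      Summable.tsum_pos (hMu i).1 (fun j => Real.rpow_nonneg (hγpos i j).le u) 0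
        (Real.rpow_pos_of_pos (hγpos i 0) u)
    have hlt : ∀ i, (∑' j, γ i j ^ u) < ∑' j, γ i j ^ s := fun i =>
      Summable.tsum_lt_tsum (i := 0)
        (fun j => (Real.rpow_lt_rpow_of_exponent_gt (hγpos i j) (hγlt1 i j) hsu).le)
        (Real.rpow_lt_rpow_of_exponent_gt (hγpos i 0) (hγlt1 i 0) hsu)
        (hMu i).1 (hMs i).1
    have hlog : ∀ i, Real.log (∑' j, γ i j ^ u) < Real.log (∑' j, γ i j ^ s) := fun i =>
      Real.log_lt_log (hposu i) (hlt i)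
    rw [hP s, hP u]
    refine Summable.tsum_lt_tsum (i := 0)
      (fun i => mul_le_mul_of_nonneg_left (hlog i).le (hηpos i).le)
      (mul_lt_mul_of_pos_left (hlog 0) (hηpos 0)) ?_ ?_
    · exact summable_weight_mul η (fun i => (hηpos i).le) hηsum _ Mu (fun i => (hMu i).2)
    · exact summable_weight_mul η (fun i => (hηpos i).le) hηsum _ Ms (fun i => (hMs i).2)
  constructor
  · intro sstar hs
    obtain ⟨M, hM⟩ := hbound sstar hs.1
    obtain ⟨htend, hid⟩ := aux_main η hηpos hηsum hη1 ω hfreq γ hγpos sstar M hM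
    have hPpos : 0 < ∑' i, η i * Real.log (∑' j, γ i j ^ sstar) := by
      have h1 := hPanti sstar h hs.1 hs.2
      rw [hh.2] at h1
      rw [← hP sstar]
      exact h1
    obtain ⟨N0, hN0⟩ := eventually_atTop.mp (htend.eventually (eventually_gt_nhds hPpos))
    refine ⟨max N0 1, fun n hn => ?_⟩
    have hn1 : 1 ≤ n := (le_max_right N0 1).trans hn.le
    have hS := hN0 n ((le_max_left N0 1).trans hn.le)
    refine ⟨hS, ?_⟩
    obtain ⟨hQpos, hlogeq⟩ := hid n hn1
    have hnpos : (0:ℝ) < n := by exact_mod_cast Nat.lt_of_lt_of_le Nat.zero_lt_one hn1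
    have hlp : 0 < Real.log (∑' σ : Fin n → ℕ, (∏ k : Fin n, γ (ω k) (σ k)) ^ sstar) := by
      rw [hlogeq]
      exact mul_pos hnpos hS
    exact (Real.log_pos_iff hQpos.le).mp hlp
  · intro shigh hsh
    have hsθ : θ < shigh := hh.1.trans hsh
    obtain ⟨M, hM⟩ := hbound shigh hsθ
    obtain ⟨htend, hid⟩ := aux_main η hηpos hηsum hη1 ω hfreq γ hγpos shigh M hM
    have hPneg : (∑' i, η i * Real.log (∑' j, γ i j ^ shigh)) < 0 := by
      have h1 := hPanti h shigh hh.1 hsh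
      rw [hh.2] at h1
      rw [← hP shigh]
      exact h1
    obtain ⟨N0, hN0⟩ := eventually_atTop.mp (htend.eventually (eventually_lt_nhds hPneg))
    refine ⟨max N0 1, fun n hn => ?_⟩
    have hn1 : 1 ≤ n := (le_max_right N0 1).trans hn.le
    have hS := hN0 n ((le_max_left N0 1).trans hn.le)
    refine ⟨hS, ?_⟩
    obtain ⟨hQpos, hlogeq⟩ := hid n hn1
    have hnpos : (0:ℝ) < n := by exact_mod_cast Nat.lt_of_lt_of_le Nat.zero_lt_one hn1
    have hlp : Real.log (∑' σ : Fin n → ℕ, (∏ k : Fin n, γ (ω k) (σ k)) ^ shigh) < 0 := by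
      rw [hlogeq]
      exact mul_neg_of_pos_of_neg hnpos hS
    exact (Real.log_neg_iff hQpos).mp hlp
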